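/- Let M = M_n(ℂ) with faithful state ω of density e^H (H Hermitian), and let a₁, …, a_m be Hermitian elements of M. For θ ∈ ℝ^m define the exponential family φ_θ with density D_θ = exp(H + Σ_i θ_i a_i) / Tr exp(H + Σ_i θ_i a_i). If M₀ ⊆ M is a *-subalgebra containing e^{itH} a_j e^{-itH} for all real t and all j, then D_θ^{it} D_ω^{-it} ∈ M₀ for all real t and all θ (i.e., M₀ is sufficient for the exponential family). -/

import Mathlib

open ComplexOrder Matrix

open scoped Matrix.Norms.Operator in
set_option maxHeartbeats 1000000 in
private theorem aux_cocycle_mem {n : ℕ}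
    (H : Matrix (Fin n) (Fin n) ℂ)
    (A : Matrix (Fin n) (Fin n) ℂ)
    (M₀ : StarSubalgebra ℂ (Matrix (Fin n) (Fin n) ℂ))
    (hAH : ∀ (s : ℝ),
      NormedSpace.exp ((Complex.I * (s : ℂ)) • H) * (A - H) *
        NormedSpace.exp ((-(Complex.I * (s : ℂ))) • H) ∈ M₀)
    (t : ℝ) :
      NormedSpace.exp ((Complex.I * (t : ℂ)) • A) *
        NormedSpace.exp ((-(Complex.I * (t : ℂ))) • H) ∈ M₀ := by
  haveI : CompleteSpace (Matrix (Fin n) (Fin n) ℂ) := FiniteDimensional.complete ℂ _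
  set S : Submodule ℂ (Matrix (Fin n) (Fin n) ℂ) := Subalgebra.toSubmodule M₀.toSubalgebra with hSdef
  have hSc : IsClosed (S : Set (Matrix (Fin n) (Fin n) ℂ)) := S.closed_of_finiteDimensional
  -- the quotient map
  let π : (Matrix (Fin n) (Fin n) ℂ) →L[ℂ] ((Matrix (Fin n) (Fin n) ℂ) ⧸ S) :=
    LinearMap.mkContinuous (E := (Matrix (Fin n) (Fin n) ℂ)) (F := (Matrix (Fin n) (Fin n) ℂ) ⧸ S) (σ := RingHom.id ℂ) S.mkQ 1 (fun x => by
      simpa using Submodule.Quotient.norm_mk_le S x)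
  have hπ : ∀ x : (Matrix (Fin n) (Fin n) ℂ), π x = Submodule.Quotient.mk x := fun _ => rfl
  -- the functions
  set u : ℝ → ℂ := fun s => (s : ℂ) * (Complex.I * (t : ℂ)) with hu
  have hu' : ∀ s : ℝ, u s = Complex.I * ((s * t : ℝ) : ℂ) := by
    intro s; simp [hu]; ring
  set f : ℝ → (Matrix (Fin n) (Fin n) ℂ) := fun s =>
    NormedSpace.exp (u s • A) * NormedSpace.exp ((-(u s)) • H) with hf
  set B : ℝ → (Matrix (Fin n) (Fin n) ℂ) := fun s =>
    (Complex.I * (t : ℂ)) •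
      (NormedSpace.exp (u s • H) * (A - H) * NormedSpace.exp ((-(u s)) • H)) with hB
  -- membership of B
  have hBmem : ∀ s : ℝ, B s ∈ S := by
    intro s
    apply S.smul_mem
    have := hAH (s * t)
    rw [← hu' s] at this
    simpa [hSdef] using this
  -- basic derivative facts
  have hud : ∀ s : ℝ, HasDerivAt u (Complex.I * (t : ℂ)) s := by
    intro s
    simpa using (Complex.ofRealCLM.hasDerivAt (x := s)).mul_const (Complex.I * (t : ℂ))
  have hexpd : ∀ (X : (Matrix (Fin n) (Fin n) ℂ)) (s : ℝ),
      HasDerivAt (fun s : ℝ => NormedSpace.exp (u s • X))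
        ((Complex.I * (t : ℂ)) • (NormedSpace.exp (u s • X) * X)) s := by
    intro X s
    exact (hasDerivAt_exp_smul_const (𝕂 := ℂ) X (u s)).scomp s (hud s)
  have hexpd' : ∀ (X : (Matrix (Fin n) (Fin n) ℂ)) (s : ℝ),
      HasDerivAt (fun s : ℝ => NormedSpace.exp ((-(u s)) • X))
        ((-(Complex.I * (t : ℂ))) • (NormedSpace.exp ((-(u s)) • X) * X)) s := by
    intro X s
    exact
      (hasDerivAt_exp_smul_const (𝕂 := ℂ) X (-(u s))).scomp s (hud s).neg
  -- f' = f * B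
  have hcomm : ∀ s : ℝ, NormedSpace.exp ((-(u s)) • H) * NormedSpace.exp (u s • H) = 1 := by
    intro s
    rw [← Matrix.exp_add_of_commute _ _ (((Commute.refl H).smul_left _).smul_right _)]
    simp
  have hcommH : ∀ s : ℝ, NormedSpace.exp ((-(u s)) • H) * H = H * NormedSpace.exp ((-(u s)) • H) := by
    intro s
    exact (((Commute.refl H).smul_left _).exp_left).eq
  have hfd : ∀ s : ℝ, HasDerivAt f (f s * B s) s := by
    intro s
    have h1 := (hexpd A s).mul (hexpd' H s)
    refine h1.congr_deriv (Eq.symm ?_)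
    rw [hf, hB]
    simp only [smul_mul_assoc, mul_smul_comm]
    rw [mul_assoc (NormedSpace.exp (u s • A)) (NormedSpace.exp ((-(u s)) • H))]
    rw [mul_assoc (NormedSpace.exp (u s • H)) (A - H), ← mul_assoc (NormedSpace.exp ((-(u s)) • H)), hcomm s, one_mul]
    rw [hcommH s]
    simp only [sub_mul, mul_sub, smul_sub, neg_smul, mul_assoc]
    abel
  -- norm bound for multiplication by elements of S
  have hπmul : ∀ (x b : (Matrix (Fin n) (Fin n) ℂ)), b ∈ S → ‖π (x * b)‖ ≤ ‖π x‖ * ‖b‖ := by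
    intro x b hb
    rcases eq_or_ne b 0 with rfl | hb0
    · simp
    have hbpos : 0 < ‖b‖ := norm_pos_iff.mpr hb0
    refine le_of_forall_pos_le_add fun ε hε => ?_
    obtain ⟨x', hx', hlt⟩ :=
      Submodule.Quotient.norm_mk_lt (Submodule.Quotient.mk x : (Matrix (Fin n) (Fin n) ℂ) ⧸ S)
        (div_pos hε hbpos)
    have hxx : x - x' ∈ S := (Submodule.Quotient.eq S).mp hx'.symm
    have hxx' : x - x' ∈ M₀.toSubalgebra := by rwa [hSdef, Subalgebra.mem_toSubmodule] at hxx
    have hb' : b ∈ M₀.toSubalgebra := by rwa [hSdef, Subalgebra.mem_toSubmodule] at hb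
    have hmem : (x - x') * b ∈ S := by
      rw [hSdef, Subalgebra.mem_toSubmodule]; exact mul_mem hxx' hb'
    have heq : π (x * b) = π (x' * b) := by
      rw [hπ, hπ, Submodule.Quotient.eq]
      rw [← sub_mul]
      exact hmem
    calc ‖π (x * b)‖ = ‖π (x' * b)‖ := by rw [heq]
      _ ≤ ‖x' * b‖ := by rw [hπ]; exact Submodule.Quotient.norm_mk_le S _
      _ ≤ ‖x'‖ * ‖b‖ := norm_mul_le _ _
      _ ≤ (‖π x‖ + ε / ‖b‖) * ‖b‖ := by
          have : ‖x'‖ ≤ ‖π x‖ + ε / ‖b‖ := by rw [hπ]; exact hlt.le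
          exact mul_le_mul_of_nonneg_right this (norm_nonneg b)
      _ = ‖π x‖ * ‖b‖ + ε := by field_simp
  -- continuity
  have hBcont : Continuous B := by
    have h1 : Continuous fun s => NormedSpace.exp (u s • H) :=
      continuous_iff_continuousAt.mpr fun s => (hexpd H s).continuousAt
    have h2 : Continuous fun s => NormedSpace.exp ((-(u s)) • H) :=
      continuous_iff_continuousAt.mpr fun s => (hexpd' H s).continuousAt
    exact ((h1.mul (continuous_const (y := A - H))).mul h2).const_smul (Complex.I * (t : ℂ))
  obtain ⟨K, hK⟩ :=
    (isCompact_Icc (a := (0:ℝ)) (b := 1)).exists_bound_of_continuousOn hBcont.continuousOn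
  -- Gronwall
  set y : ℝ → (Matrix (Fin n) (Fin n) ℂ) ⧸ S := fun s => π (f s) with hy
  haveI : @IsClosed _ PseudoMetricSpace.toUniformSpace.toTopologicalSpace (S : Set (Matrix (Fin n) (Fin n) ℂ)) :=
    S.closed_of_finiteDimensional
  haveI : ContinuousSMul ℝ ((Matrix (Fin n) (Fin n) ℂ) ⧸ S) :=
    (NormedSpace.restrictScalars ℝ ℂ ((Matrix (Fin n) (Fin n) ℂ) ⧸ S)).toIsBoundedSMul.continuousSMul
  have hyd : ∀ s : ℝ, HasDerivAt y (π (f s * B s)) s := by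
    intro s
    have h2 : HasDerivAt (fun s : ℝ => π (f s)) (π (f s * B s)) s := by
      exact (π.restrictScalars ℝ).hasFDerivAt.comp_hasDerivAt (x := s) (hfd s)
    simpa [hy] using h2
  have hy0 : ‖y 0‖ ≤ 0 := by
    have hf0 : f 0 = 1 := by simp [hf, hu]
    have h1S : (1 : Matrix (Fin n) (Fin n) ℂ) ∈ S := M₀.one_mem
    simp [hy, hf0, hπ, Submodule.Quotient.mk_eq_zero, h1S]
  have hbound : ∀ s ∈ Set.Ico (0:ℝ) 1, ‖π (f s * B s)‖ ≤ K * ‖y s‖ + 0 := by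
    intro s hs
    calc ‖π (f s * B s)‖ ≤ ‖π (f s)‖ * ‖B s‖ := hπmul (f s) (B s) (hBmem s)
      _ ≤ ‖π (f s)‖ * K :=
          mul_le_mul_of_nonneg_left (hK s (Set.mem_Icc_of_Ico hs)) (norm_nonneg _)
      _ = K * ‖y s‖ + 0 := by rw [mul_comm]; simp [hy]
  have hgron := norm_le_gronwallBound_of_norm_deriv_right_le
      (f := y) (f' := fun s => π (f s * B s)) (δ := 0) (K := K) (ε := 0) (a := 0) (b := 1)
      (continuous_iff_continuousAt.mpr fun s => (hyd s).continuousAt).continuousOn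
      (fun s _ => (hyd s).hasDerivWithinAt) hy0 hbound 1 ⟨zero_le_one, le_rfl⟩
  rw [sub_zero, gronwallBound_ε0_δ0] at hgron
  have hnorm0 : ‖y 1‖ = 0 := le_antisymm hgron (norm_nonneg _)
  haveI : IsClosed (S : Set (Matrix (Fin n) (Fin n) ℂ)) := hSc
  have hy1 : y 1 = 0 := norm_eq_zero.mp hnorm0
  have hf1 : f 1 ∈ S := by
    rw [← Submodule.Quotient.mk_eq_zero S, ← hπ]
    exact hy1
  have hu1 : u 1 = Complex.I * (t : ℂ) := by simp [hu]
  simpa [hf, hu1, hSdef] using hf1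

/-- **Sufficiency for quantum exponential families.**
Let `ω` have density `e^H` and let `φ_θ` have density
`D_θ = exp(H + Σ_i θ_i a_i)/Z(θ)`.  If `M₀` contains `e^{itH} a_j e^{-itH}`
for all real `t` and all `j`, then the Connes cocycle
`D_θ^{it} D_ω^{-it} = Z(θ)^{-it} exp(it(H + Σ_j θ_j a_j)) exp(-itH)`
belongs to `M₀` for all `t` and `θ`, i.e. `M₀` is sufficient for the
exponential family. -/
theorem exponential_family_sufficiency {n m : ℕ}
    (H : Matrix (Fin n) (Fin n) ℂ) (hH : H.IsHermitian)
    (a : Fin m → Matrix (Fin n) (Fin n) ℂ) (ha : ∀ j, (a j).IsHermitian)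
    (M₀ : StarSubalgebra ℂ (Matrix (Fin n) (Fin n) ℂ))
    (hM₀ : ∀ (t : ℝ) (j : Fin m),
      NormedSpace.exp ((Complex.I * (t : ℂ)) • H) * a j *
        NormedSpace.exp ((-(Complex.I * (t : ℂ))) • H) ∈ M₀) :
    ∀ (θ : Fin m → ℝ) (t : ℝ),
      ((NormedSpace.exp (H + ∑ j, (θ j : ℂ) • a j)).trace ^
          (-(Complex.I * (t : ℂ)))) •
        (NormedSpace.exp ((Complex.I * (t : ℂ)) • (H + ∑ j, (θ j : ℂ) • a j)) *
          NormedSpace.exp ((-(Complex.I * (t : ℂ))) • H)) ∈ M₀ := by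
  intro θ t
  set A : Matrix (Fin n) (Fin n) ℂ := H + ∑ j, (θ j : ℂ) • a j with hA
  suffices h : NormedSpace.exp ((Complex.I * (t : ℂ)) • A) *
      NormedSpace.exp ((-(Complex.I * (t : ℂ))) • H) ∈ M₀ by
    exact M₀.smul_mem h _
  refine aux_cocycle_mem H A M₀ (fun s => ?_) t
  have hAH : A - H = ∑ j, (θ j : ℂ) • a j := by rw [hA, add_sub_cancel_left]
  rw [hAH, Finset.mul_sum, Finset.sum_mul]
  refine sum_mem fun j _ => ?_
  rw [mul_smul_comm, smul_mul_assoc]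
  exact M₀.smul_mem (hM₀ s j) _
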